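/- arXiv:2311.04023 — 2 statements merged into one kernel-verified Lean document; each statement's English description precedes it below -/
import Mathlib

section
/- For all constants c > 0 and c' > 0: limsup_{r→∞} P(L_0(r, c·r)) > 0 if and only if limsup_{r→∞} P(L_0(r, c'·r)) > 0. In words, the property that edges of length at least c·r with an endpoint in the ball of radius r about the origin occur with probability bounded away from 0 along a sequence of radii r → ∞ does not depend on the value of the constant c > 0. -/
open Filter MeasureTheory
open scoped ENNReal NNReal

/-- Key one-directional lemma: if the limsup for constant `c'` vanishes,
so does the limsup for constant `c`. -/
lemma long_edge_aux
    (d : ℕ)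
    {Ω : Type*} [MeasurableSpace Ω] (μ : Measure Ω) [IsProbabilityMeasure μ]
    (E : Ω → Set (EuclideanSpace ℝ (Fin d) × EuclideanSpace ℝ (Fin d)))
    (L : EuclideanSpace ℝ (Fin d) → ℝ → ℝ → Set Ω)
    (hLdef : ∀ x r t, L x r t =
      {ω | ∃ a b : EuclideanSpace ℝ (Fin d),
        (a, b) ∈ E ω ∧ a ∈ Metric.ball x r ∧ t < ‖b - a‖})
    (hinv : ∀ x r t, 0 < r → 0 < t → μ (L x r t) = μ (L 0 r t))
    (c c' : ℝ) (hc : 0 < c) (hc' : 0 < c')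
    (h0 : limsup (fun r : ℝ => μ (L 0 r (c' * r))) atTop = 0) :
    limsup (fun r : ℝ => μ (L 0 r (c * r))) atTop = 0 := by
  set κ : ℝ := c / c' with hκdef
  have hκ : 0 < κ := div_pos hc hc'
  -- finite cover of the unit closed ball by balls of radius κ
  have hcov : Metric.closedBall (0 : EuclideanSpace ℝ (Fin d)) 1 ⊆
      ⋃ x : EuclideanSpace ℝ (Fin d), Metric.ball x κ :=
    fun y _ => Set.mem_iUnion.2 ⟨y, Metric.mem_ball_self hκ⟩
  obtain ⟨X, hX⟩ := (isCompact_closedBall (0 : EuclideanSpace ℝ (Fin d)) 1).elim_finite_subcover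
    _ (fun x => Metric.isOpen_ball) hcov
  set N : ℕ := X.card with hN
  -- the covering inequality for each r > 0
  have key : ∀ r : ℝ, 0 < r →
      μ (L 0 r (c * r)) ≤ (N : ℝ≥0∞) * μ (L 0 (κ * r) (c' * (κ * r))) := by
    intro r hr
    have hsub : L 0 r (c * r) ⊆ ⋃ x ∈ X, L (r • x) (κ * r) (c' * (κ * r)) := by
      intro ω hω
      rw [hLdef] at hω
      obtain ⟨a, b, hab, ha, hlen⟩ := hω
      have ha' : ‖a‖ < r := by
        simpa [mem_ball_iff_norm] using ha
      have hmem : r⁻¹ • a ∈ Metric.closedBall (0 : EuclideanSpace ℝ (Fin d)) 1 := by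
        rw [Metric.mem_closedBall, dist_zero_right, norm_smul, norm_inv,
          Real.norm_of_nonneg hr.le]
        rw [inv_mul_le_iff₀ hr]
        simpa using ha'.le
      obtain ⟨x, hxX, hx⟩ := by
        have := hX hmem
        simpa [Set.mem_iUnion] using this
      refine Set.mem_biUnion hxX ?_
      rw [hLdef]
      refine ⟨a, b, hab, ?_, ?_⟩
      · rw [mem_ball_iff_norm]
        have : ‖r⁻¹ • a - x‖ < κ := by simpa [mem_ball_iff_norm, dist_eq_norm] using hx
        have heq : a - r • x = r • (r⁻¹ • a - x) := by
          rw [smul_sub, smul_smul, mul_inv_cancel₀ hr.ne', one_smul]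
        have h2 : ‖a - r • x‖ = r * ‖r⁻¹ • a - x‖ := by
          rw [heq, norm_smul, Real.norm_of_nonneg hr.le]
        rw [h2]
        calc r * ‖r⁻¹ • a - x‖ < r * κ := by
              exact mul_lt_mul_of_pos_left this hr
          _ = κ * r := mul_comm _ _
      · have : c' * (κ * r) = c * r := by
          field_simp [hκdef]
          rw [hκdef]; field_simp
        rw [this]; exact hlen
    calc μ (L 0 r (c * r)) ≤ ∑ x ∈ X, μ (L (r • x) (κ * r) (c' * (κ * r))) :=
          (measure_mono hsub).trans (measure_biUnion_finset_le X _)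
      _ = ∑ _x ∈ X, μ (L 0 (κ * r) (c' * (κ * r))) := by
          refine Finset.sum_congr rfl fun x _ => ?_
          exact hinv _ _ _ (mul_pos hκ hr) (mul_pos hc' (mul_pos hκ hr))
      _ = (N : ℝ≥0∞) * μ (L 0 (κ * r) (c' * (κ * r))) := by
          rw [Finset.sum_const, nsmul_eq_mul]
  -- conclude via ε-argument
  rw [← nonpos_iff_eq_zero]
  have : ∀ ε : NNReal, 0 < ε → (0:ℝ≥0∞) < ⊤ →
      limsup (fun r : ℝ => μ (L 0 r (c * r))) atTop ≤ (0 : ℝ≥0∞) + ε := by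
    intro ε hε _
    set ε' : ℝ≥0∞ := (ε : ℝ≥0∞) / (N + 1) with hε'
    have hε'pos : 0 < ε' := ENNReal.div_pos (by exact_mod_cast hε.ne') (by
      simp)
    have hsmall : limsup (fun r : ℝ => μ (L 0 r (c' * r))) atTop < ε' := by
      rw [h0]; exact hε'pos
    have hev : ∀ᶠ r : ℝ in atTop, μ (L 0 r (c' * r)) < ε' :=
      Filter.eventually_lt_of_limsup_lt hsmall
    have htend : Tendsto (fun r : ℝ => κ * r) atTop atTop :=
      Filter.Tendsto.const_mul_atTop hκ tendsto_id
    have hev2 : ∀ᶠ r : ℝ in atTop, μ (L 0 (κ * r) (c' * (κ * r))) < ε' :=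
      htend.eventually hev
    have hevpos : ∀ᶠ r : ℝ in atTop, (0:ℝ) < r := eventually_gt_atTop 0
    have hle : ∀ᶠ r : ℝ in atTop, μ (L 0 r (c * r)) ≤ (0 : ℝ≥0∞) + ε := by
      filter_upwards [hev2, hevpos] with r h1 h2
      calc μ (L 0 r (c * r)) ≤ (N : ℝ≥0∞) * μ (L 0 (κ * r) (c' * (κ * r))) := key r h2
        _ ≤ (N : ℝ≥0∞) * ε' := mul_le_mul_right h1.le _
        _ ≤ (N + 1 : ℝ≥0∞) * ((ε : ℝ≥0∞) / (N + 1)) := by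
            exact mul_le_mul_left (by simp) _
        _ ≤ (ε : ℝ≥0∞) := ENNReal.mul_div_le
        _ = (0 : ℝ≥0∞) + ε := (zero_add _).symm
    exact Filter.limsup_le_of_le (by isBoundedDefault) hle
  exact ENNReal.le_of_forall_pos_le_add this

/-- The long-edge property `H(λ, c)` — that edges of length at least `c·r` with an
endpoint in `B(0, r)` occur with probability bounded away from `0` along radii
`r → ∞` — does not depend on the constant `c > 0`. -/
theorem long_edge_property_independent_of_constant
    (d : ℕ) (hd : 1 ≤ d)
    {Ω : Type*} [MeasurableSpace Ω] (μ : Measure Ω) [IsProbabilityMeasure μ]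
    (E : Ω → Set (EuclideanSpace ℝ (Fin d) × EuclideanSpace ℝ (Fin d)))
    (L : EuclideanSpace ℝ (Fin d) → ℝ → ℝ → Set Ω)
    (hLdef : ∀ x r t, L x r t =
      {ω | ∃ a b : EuclideanSpace ℝ (Fin d),
        (a, b) ∈ E ω ∧ a ∈ Metric.ball x r ∧ t < ‖b - a‖})
    (hLmeas : ∀ x r t, 0 < r → 0 < t → MeasurableSet (L x r t))
    (hinv : ∀ x r t, 0 < r → 0 < t → μ (L x r t) = μ (L 0 r t))
    (c c' : ℝ) (hc : 0 < c) (hc' : 0 < c') :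
    0 < limsup (fun r : ℝ => μ (L 0 r (c * r))) atTop ↔
      0 < limsup (fun r : ℝ => μ (L 0 r (c' * r))) atTop := by
  rw [pos_iff_ne_zero, pos_iff_ne_zero]
  constructor
  · intro h h0
    exact h (long_edge_aux d μ E L hLdef hinv c c' hc hc' h0)
  · intro h h0
    exact h (long_edge_aux d μ E L hLdef hinv c' c hc' hc h0)
end

section
/- Let C > 0 and r₀ > 0 be reals and let f, g : ℝ → ℝ be functions such that: f(r) ≥ 0 for all r ≥ r₀; 0 ≤ g(r) ≤ 1/(4C) for all r ≥ r₀; g(r) → 0 as r → ∞; f(10·r) ≤ C·f(r)² + g(r) for all r ≥ r₀; and f(r) ≤ 1/(2C) for all r ∈ [r₀, 10·r₀]. Then f(r) → 0 as r → ∞. -/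
open Filter

/-- Full Gouéré-type renormalization lemma: the recursion `f(10r) ≤ C f(r)² + g(r)`
with error `g ≤ 1/(4C)` tending to `0`, initialized with `f ≤ 1/(2C)` on `[r₀, 10 r₀]`,
implies `f(r) → 0` as `r → ∞`. -/
theorem gouere_renormalization
    (C r₀ : ℝ) (hC : 0 < C) (hr₀ : 0 < r₀)
    (f g : ℝ → ℝ)
    (hf0 : ∀ r, r₀ ≤ r → 0 ≤ f r)
    (hg : ∀ r, r₀ ≤ r → 0 ≤ g r ∧ g r ≤ 1 / (4 * C))
    (hgto : Tendsto g atTop (nhds 0))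
    (hrec : ∀ r, r₀ ≤ r → f (10 * r) ≤ C * (f r) ^ 2 + g r)
    (hinit : ∀ r, r₀ ≤ r → r ≤ 10 * r₀ → f r ≤ 1 / (2 * C)) :
    Tendsto f atTop (nhds 0) := by
  have hC2 : (0:ℝ) < 2 * C := by linarith
  have hC4 : (0:ℝ) < 4 * C := by linarith
  have hkey : C * (1 / (2 * C)) ^ 2 + 1 / (4 * C) = 1 / (2 * C) := by
    field_simp
    ring
  -- Step 1: f ≤ 1/(2C) on [r₀, 10^(n+1) r₀]
  have A : ∀ n : ℕ, ∀ r, r₀ ≤ r → r ≤ 10 ^ (n + 1) * r₀ → f r ≤ 1 / (2 * C) := by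
    intro n
    induction n with
    | zero =>
      intro r h1 h2
      exact hinit r h1 (by simpa using h2)
    | succ n ih =>
      intro r h1 h2
      by_cases hcase : r ≤ 10 * r₀
      · exact hinit r h1 hcase
      · have hr' : r₀ ≤ r / 10 := by
          rw [le_div_iff₀ (by norm_num : (0:ℝ) < 10)]; linarith
        have hr'2 : r / 10 ≤ 10 ^ (n + 1) * r₀ := by
          rw [div_le_iff₀ (by norm_num : (0:ℝ) < 10)]
          calc r ≤ 10 ^ (n + 2) * r₀ := h2
            _ = 10 ^ (n + 1) * r₀ * 10 := by ring
        have hfb := ih (r / 10) hr' hr'2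
        have hsq : (f (r / 10)) ^ 2 ≤ (1 / (2 * C)) ^ 2 :=
          pow_le_pow_left₀ (hf0 _ hr') hfb 2
        have hgr := (hg (r / 10) hr').2
        have := hrec (r / 10) hr'
        have h10 : 10 * (r / 10) = r := by ring
        rw [h10] at this
        nlinarith
  have A' : ∀ r, r₀ ≤ r → f r ≤ 1 / (2 * C) := by
    intro r h1
    obtain ⟨n, hn⟩ := pow_unbounded_of_one_lt (r / r₀) (by norm_num : (1:ℝ) < 10)
    refine A n r h1 ?_
    have : r / r₀ ≤ 10 ^ (n + 1) := le_of_lt (lt_of_lt_of_le hn (by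
      exact pow_le_pow_right₀ (by norm_num) (Nat.le_succ n)))
    calc r = (r / r₀) * r₀ := by field_simp
      _ ≤ 10 ^ (n + 1) * r₀ := by nlinarith
  -- Step 2: the contraction
  rw [Metric.tendsto_atTop]
  intro ε hε
  set ε₁ : ℝ := min (ε / 2) (1 / (2 * C)) with hε₁def
  have hε₁pos : 0 < ε₁ := lt_min (by linarith) (by positivity)
  have hε₁le : ε₁ ≤ 1 / (2 * C) := min_le_right _ _
  have hε₁le2 : ε₁ ≤ ε / 2 := min_le_left _ _
  set G : ℝ := ε₁ / 4 with hGdef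
  have hGpos : 0 < G := by positivity
  -- choose s ≥ r₀ with g ≤ G beyond s
  obtain ⟨N, hN⟩ := (Metric.tendsto_atTop.mp hgto) G hGpos
  set s : ℝ := max N r₀ with hsdef
  have hsr₀ : r₀ ≤ s := le_max_right _ _
  have hgs : ∀ r, s ≤ r → g r ≤ G := by
    intro r hr
    have := hN r (le_trans (le_max_left _ _) hr)
    rw [Real.dist_eq, sub_zero] at this
    exact le_of_lt (lt_of_le_of_lt (le_abs_self _) this)
  -- recursive bound sequence
  obtain ⟨b, hb0, hbsucc⟩ : ∃ b : ℕ → ℝ, b 0 = 1 / (2 * C) ∧ ∀ n, b (n + 1) = b n / 2 + G :=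
    ⟨fun n => Nat.rec (1 / (2 * C)) (fun _ bn => bn / 2 + G) n, rfl, fun n => rfl⟩
  have hbbound : ∀ n, 0 ≤ b n ∧ b n ≤ 1 / (2 * C) := by
    intro n
    induction n with
    | zero => rw [hb0]; constructor; · positivity
              · exact le_refl _
    | succ n ih =>
      rw [hbsucc]
      constructor
      · linarith [ih.1]
      · have hG14 : G ≤ 1 / (4 * C) := by
          have h1 : ε₁ / 4 ≤ (1 / (2 * C)) / 4 := by linarith
          have h2 : (1 / (2 * C)) / 4 ≤ 1 / (4 * C) := by
            rw [div_div]
            apply one_div_le_one_div_of_le hC4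
            nlinarith
          calc G = ε₁ / 4 := hGdef
            _ ≤ (1 / (2 * C)) / 4 := h1
            _ ≤ 1 / (4 * C) := h2
        have h2 : b n / 2 ≤ 1 / (4 * C) := by
          have := ih.2
          have h14 : (1 / (2 * C)) / 2 = 1 / (4 * C) := by field_simp; ring
          linarith
        linarith
  have hbgeo : ∀ n, b n ≤ (1 / 2) ^ n * (1 / (2 * C)) + 2 * G := by
    intro n
    induction n with
    | zero => rw [hb0]; simp; positivity
    | succ n ih =>
      rw [hbsucc]
      have : (1/2:ℝ) ^ (n+1) * (1 / (2*C)) = ((1/2)^n * (1 / (2*C))) / 2 := by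
        rw [pow_succ]; ring
      linarith
  -- f (10^n r) ≤ b n for r ≥ s
  have hfb : ∀ n : ℕ, ∀ r, s ≤ r → f (10 ^ n * r) ≤ b n := by
    intro n
    induction n with
    | zero =>
      intro r hr
      simpa [hb0] using A' r (le_trans hsr₀ hr)
    | succ n ih =>
      intro r hr
      have hrr₀ : r₀ ≤ r := le_trans hsr₀ hr
      have hpow : (1:ℝ) ≤ 10 ^ n := one_le_pow₀ (by norm_num : (1:ℝ) ≤ 10)
      have hrn : r₀ ≤ 10 ^ n * r := by nlinarith [hr₀.le]
      have hsn : s ≤ 10 ^ n * r := by nlinarith [lt_of_lt_of_le hr₀ hsr₀]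
      have h1 := hrec (10 ^ n * r) hrn
      have heq : 10 * (10 ^ n * r) = 10 ^ (n + 1) * r := by rw [pow_succ]; ring
      rw [heq] at h1
      have h2 := ih r hr
      have h3 : (f (10 ^ n * r)) ^ 2 ≤ b n * (1 / (2 * C)) := by
        have hnn := hf0 _ hrn
        nlinarith [(hbbound n).2]
      have h4 : C * (b n * (1 / (2 * C))) = b n / 2 := by field_simp
      have h5 := hgs _ hsn
      rw [hbsucc]
      nlinarith
  -- pick n with (1/2)^n * (1/(2C)) < ε/2
  obtain ⟨n, hn⟩ := exists_pow_lt_of_lt_one (show (0:ℝ) < ε / 2 * (2 * C) by positivity)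
    (by norm_num : (1/2:ℝ) < 1)
  have hnε : (1/2:ℝ) ^ n * (1 / (2 * C)) < ε / 2 := by
    have h2C : (0:ℝ) < 1 / (2 * C) := by positivity
    calc (1/2:ℝ) ^ n * (1 / (2 * C)) < (ε / 2 * (2 * C)) * (1 / (2 * C)) :=
          mul_lt_mul_of_pos_right hn h2C
      _ = ε / 2 := by field_simp
  refine ⟨10 ^ n * s, fun r hr => ?_⟩
  have hspos : 0 < s := lt_of_lt_of_le hr₀ hsr₀
  have hpowpos : (0:ℝ) < 10 ^ n := by positivity
  have hrs : s ≤ r / 10 ^ n := by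
    rw [le_div_iff₀ hpowpos]; linarith [hr]
  have := hfb n (r / 10 ^ n) hrs
  have heq : 10 ^ n * (r / 10 ^ n) = r := by
    rw [mul_comm]; exact div_mul_cancel₀ r (ne_of_gt hpowpos)
  rw [heq] at this
  have h1n : (1:ℝ) ≤ 10 ^ n := one_le_pow₀ (by norm_num : (1:ℝ) ≤ 10)
  have hs10 : s ≤ 10 ^ n * s := le_mul_of_one_le_left hspos.le h1n
  have hrr₀ : r₀ ≤ r := by linarith
  rw [Real.dist_eq, sub_zero, abs_of_nonneg (hf0 r hrr₀)]
  calc f r ≤ b n := this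
    _ ≤ (1/2)^n * (1 / (2 * C)) + 2 * G := hbgeo n
    _ < ε / 2 + 2 * G := by linarith
    _ ≤ ε / 2 + ε / 2 := by
        have : 2 * G = ε₁ / 2 := by rw [hGdef]; ring
        linarith
    _ = ε := by ring
end
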